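/- Let f:[a,b]×[c,d]→ℝ be absolutely continuous with |∂²f/∂t∂s| ≤ M on (a,b)×(c,d). Then |(b-a)(d-c)·f((a+b)/2,(c+d)/2) - (d-c)∫_a^b f(t,(c+d)/2) dt - (b-a)∫_c^d f((a+b)/2,s) ds + ∫_a^b∫_c^d f(t,s) ds dt| ≤ (1/16)·M·(b-a)²(d-c)². -/

import Mathlib

open Set intervalIntegral MeasureTheory

lemma mvt_abs_le {g g' : ℝ → ℝ} {p q K : ℝ} (_hK0 : 0 ≤ K)
    (h : ∀ u ∈ Set.uIcc p q, HasDerivAt g (g' u) u)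
    (hK : ∀ u ∈ Set.Ioo (min p q) (max p q), |g' u| ≤ K) :
    |g q - g p| ≤ K * |q - p| := by
  rcases lt_trichotomy p q with hpq | hpq | hpq
  · have hcont : ContinuousOn g (Set.Icc p q) := fun x hx =>
      (h x (by rwa [Set.uIcc_of_le hpq.le])).continuousAt.continuousWithinAt
    obtain ⟨ξ, hξ, hs⟩ := exists_hasDerivAt_eq_slope g g' hpq hcont
      (fun x hx => h x (by rw [Set.uIcc_of_le hpq.le]; exact Set.Ioo_subset_Icc_self hx))
    have hne : q - p ≠ 0 := sub_ne_zero.mpr hpq.ne'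
    have : g q - g p = g' ξ * (q - p) := by field_simp at hs ⊢; linarith [hs]
    rw [this, abs_mul]
    have hb := hK ξ (by rwa [min_eq_left hpq.le, max_eq_right hpq.le])
    exact mul_le_mul_of_nonneg_right hb (abs_nonneg _)
  · subst hpq; simp [_hK0]
  · have hcont : ContinuousOn g (Set.Icc q p) := fun x hx =>
      (h x (by rwa [Set.uIcc_of_ge hpq.le])).continuousAt.continuousWithinAt
    obtain ⟨ξ, hξ, hs⟩ := exists_hasDerivAt_eq_slope g g' hpq hcont
      (fun x hx => h x (by rw [Set.uIcc_of_ge hpq.le]; exact Set.Ioo_subset_Icc_self hx))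
    have hne : p - q ≠ 0 := sub_ne_zero.mpr hpq.ne'
    have : g q - g p = g' ξ * (q - p) := by field_simp at hs ⊢; linarith [hs]
    rw [this, abs_mul]
    have hb := hK ξ (by rwa [min_eq_right hpq.le, max_eq_left hpq.le])
    exact mul_le_mul_of_nonneg_right hb (abs_nonneg _)

lemma integral_abs_mid (c d : ℝ) (h : c ≤ d) :
    ∫ s in c..d, |s - (c + d) / 2| = (d - c) ^ 2 / 4 := by
  set m := (c + d) / 2 with hm
  have hcm : c ≤ m := by simp [hm]; linarith
  have hmd : m ≤ d := by simp [hm]; linarith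
  have i1 : IntervalIntegrable (fun s => |s - m|) MeasureTheory.volume c m :=
    (continuous_abs.comp (continuous_id.sub continuous_const)).intervalIntegrable _ _
  have i2 : IntervalIntegrable (fun s => |s - m|) MeasureTheory.volume m d :=
    (continuous_abs.comp (continuous_id.sub continuous_const)).intervalIntegrable _ _
  rw [← intervalIntegral.integral_add_adjacent_intervals i1 i2]
  have e1 : (∫ s in c..m, |s - m|) = ∫ s in c..m, (m - s) := by
    apply intervalIntegral.integral_congr
    intro s hs
    rw [Set.uIcc_of_le hcm] at hs
    show |s - m| = m - s
    rw [abs_of_nonpos (by linarith [hs.2])]; ring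
  have e2 : (∫ s in m..d, |s - m|) = ∫ s in m..d, (s - m) := by
    apply intervalIntegral.integral_congr
    intro s hs
    rw [Set.uIcc_of_le hmd] at hs
    show |s - m| = s - m
    exact abs_of_nonneg (by linarith [hs.1])
  rw [e1, e2]
  have j1 : (∫ s in c..m, (m - s)) = m * (m - c) - (m ^ 2 - c ^ 2) / 2 := by
    rw [intervalIntegral.integral_sub (intervalIntegrable_const)
      (intervalIntegral.intervalIntegrable_id), intervalIntegral.integral_const,
      integral_id]
    simp [smul_eq_mul]; ring
  have j2 : (∫ s in m..d, (s - m)) = (d ^ 2 - m ^ 2) / 2 - m * (d - m) := by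
    rw [intervalIntegral.integral_sub (intervalIntegral.intervalIntegrable_id)
      (intervalIntegrable_const), intervalIntegral.integral_const, integral_id]
    simp [smul_eq_mul]; ring
  rw [j1, j2, hm]; ring

theorem sarikaya_midpoint (a b c d M : ℝ) (hab : a < b) (hcd : c < d)
    (f f₁ f₂ : ℝ → ℝ → ℝ)
    (hc : ContinuousOn (fun p : ℝ × ℝ => f p.1 p.2) (Set.Icc a b ×ˢ Set.Icc c d))
    (hd1 : ∀ t ∈ Set.Icc a b, ∀ s ∈ Set.Icc c d, HasDerivAt (fun u => f u s) (f₁ t s) t)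
    (hd2 : ∀ t ∈ Set.Ioo a b, ∀ s ∈ Set.Ioo c d, HasDerivAt (fun v => f₁ t v) (f₂ t s) s)
    (hM : ∀ t ∈ Set.Ioo a b, ∀ s ∈ Set.Ioo c d, |f₂ t s| ≤ M) :
    |(b - a) * (d - c) * f ((a + b) / 2) ((c + d) / 2)
        - (d - c) * (∫ t in a..b, f t ((c + d) / 2))
        - (b - a) * (∫ s in c..d, f ((a + b) / 2) s)
        + ∫ t in a..b, ∫ s in c..d, f t s| ≤
      (1 / 16) * M * (b - a) ^ 2 * (d - c) ^ 2 := by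
  set x₀ : ℝ := (a + b) / 2 with hx₀def
  set y₀ : ℝ := (c + d) / 2 with hy₀def
  have hx₀ : x₀ ∈ Set.Ioo a b := ⟨by rw [hx₀def]; linarith, by rw [hx₀def]; linarith⟩
  have hy₀ : y₀ ∈ Set.Ioo c d := ⟨by rw [hy₀def]; linarith, by rw [hy₀def]; linarith⟩
  have hx₀I : x₀ ∈ Set.Icc a b := Set.Ioo_subset_Icc_self hx₀
  have hy₀I : y₀ ∈ Set.Icc c d := Set.Ioo_subset_Icc_self hy₀
  have hM0 : 0 ≤ M := (abs_nonneg _).trans (hM x₀ hx₀ y₀ hy₀)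
  -- clamped version of f
  set π₁ : ℝ → ℝ := fun x => min b (max a x) with hπ₁def
  set π₂ : ℝ → ℝ := fun y => min d (max c y) with hπ₂def
  have hπ₁mem : ∀ x, π₁ x ∈ Set.Icc a b := fun x =>
    ⟨le_min hab.le (le_max_left _ _), min_le_left _ _⟩
  have hπ₂mem : ∀ y, π₂ y ∈ Set.Icc c d := fun y =>
    ⟨le_min hcd.le (le_max_left _ _), min_le_left _ _⟩
  set F : ℝ → ℝ → ℝ := fun t s => f (π₁ t) (π₂ s) with hFdef
  have hFc : Continuous (fun p : ℝ × ℝ => F p.1 p.2) := by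
    have h := hc.comp_continuous (f := fun p : ℝ × ℝ => (π₁ p.1, π₂ p.2))
      ((continuous_const.min (continuous_const.max continuous_fst)).prodMk
        (continuous_const.min (continuous_const.max continuous_snd)))
      (fun p => ⟨hπ₁mem _, hπ₂mem _⟩)
    exact h
  have hFeq : ∀ t ∈ Set.Icc a b, ∀ s ∈ Set.Icc c d, F t s = f t s := by
    intro t ht s hs
    rw [hFdef]
    simp only [hπ₁def, hπ₂def, max_eq_right ht.1, min_eq_right ht.2,
      max_eq_right hs.1, min_eq_right hs.2]
  have hFt : ∀ t, Continuous (fun s => F t s) := fun t =>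
    hFc.comp (continuous_const.prodMk continuous_id)
  have hFs : ∀ s, Continuous (fun t => F t s) := fun s =>
    hFc.comp (continuous_id.prodMk continuous_const)
  -- pointwise bound
  have key : ∀ t ∈ Set.Ioo a b, ∀ s ∈ Set.Ioo c d,
      |F t s - F t y₀ - F x₀ s + F x₀ y₀| ≤ M * |s - y₀| * |t - x₀| := by
    intro t ht s hs
    have htI : t ∈ Set.Icc a b := Set.Ioo_subset_Icc_self ht
    have hsI : s ∈ Set.Icc c d := Set.Ioo_subset_Icc_self hs
    have hder : ∀ u ∈ Set.Ioo a b, |f₁ u s - f₁ u y₀| ≤ M * |s - y₀| := by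
      intro u hu
      have hsub : Set.uIcc y₀ s ⊆ Set.Ioo c d := Set.ordConnected_Ioo.uIcc_subset hy₀ hs
      have hsub' : Set.Ioo (min y₀ s) (max y₀ s) ⊆ Set.Ioo c d := by
        intro v hv
        exact ⟨lt_of_le_of_lt (le_min hy₀.1.le hs.1.le) hv.1,
          lt_of_lt_of_le hv.2 (max_le hy₀.2.le hs.2.le)⟩
      exact mvt_abs_le hM0 (fun v hv => hd2 u hu v (hsub hv)) (fun v hv => hM u hu v (hsub' hv))
    have hsubt : Set.uIcc x₀ t ⊆ Set.Icc a b :=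
      Set.ordConnected_Icc.uIcc_subset hx₀I htI
    have hsubt' : Set.Ioo (min x₀ t) (max x₀ t) ⊆ Set.Ioo a b := by
      intro u hu
      exact ⟨lt_of_le_of_lt (le_min hx₀.1.le ht.1.le) hu.1,
        lt_of_lt_of_le hu.2 (max_le hx₀.2.le ht.2.le)⟩
    have hmain := mvt_abs_le (g := fun u => f u s - f u y₀)
      (g' := fun u => f₁ u s - f₁ u y₀) (p := x₀) (q := t)
      (K := M * |s - y₀|) (mul_nonneg hM0 (abs_nonneg _))
      (fun u hu => (hd1 u (hsubt hu) s hsI).sub (hd1 u (hsubt hu) y₀ hy₀I))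
      (fun u hu => hder u (hsubt' hu))
    have heq : F t s - F t y₀ - F x₀ s + F x₀ y₀
        = (f t s - f t y₀) - (f x₀ s - f x₀ y₀) := by
      rw [hFeq t htI s hsI, hFeq t htI y₀ hy₀I, hFeq x₀ hx₀I s hsI, hFeq x₀ hx₀I y₀ hy₀I]
      ring
    rw [heq]
    exact hmain
  -- rewrite goal in terms of F
  have e0 : f x₀ y₀ = F x₀ y₀ := (hFeq _ hx₀I _ hy₀I).symm
  have e1 : (∫ t in a..b, f t y₀) = ∫ t in a..b, F t y₀ :=
    (intervalIntegral.integral_congr fun t ht =>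
      hFeq t (by rwa [Set.uIcc_of_le hab.le] at ht) y₀ hy₀I).symm
  have e2 : (∫ s in c..d, f x₀ s) = ∫ s in c..d, F x₀ s :=
    (intervalIntegral.integral_congr fun s hs =>
      hFeq x₀ hx₀I s (by rwa [Set.uIcc_of_le hcd.le] at hs)).symm
  have e3 : (∫ t in a..b, ∫ s in c..d, f t s) = ∫ t in a..b, ∫ s in c..d, F t s :=
    (intervalIntegral.integral_congr fun t ht =>
      intervalIntegral.integral_congr fun s hs =>
        hFeq t (by rwa [Set.uIcc_of_le hab.le] at ht)
          s (by rwa [Set.uIcc_of_le hcd.le] at hs)).symm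
  rw [e0, e1, e2, e3]
  -- the double-integral identity
  set G : ℝ → ℝ := fun t => ∫ s in c..d, (F t s - F t y₀ - F x₀ s + F x₀ y₀) with hGdef
  have iF : ∀ t, IntervalIntegrable (fun s => F t s) volume c d := fun t =>
    (hFt t).intervalIntegrable _ _
  have iFy : IntervalIntegrable (fun t => F t y₀) volume a b :=
    (hFs y₀).intervalIntegrable _ _
  have iI : Continuous (fun t => ∫ s in c..d, F t s) := by
    have hu : Continuous (Function.uncurry F) := hFc
    exact intervalIntegral.continuous_parametric_intervalIntegral_of_continuous' hu c d
  have hGint : ∀ t, G t = (∫ s in c..d, F t s) - (d - c) * F t y₀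
      - (∫ s in c..d, F x₀ s) + (d - c) * F x₀ y₀ := by
    intro t
    show (∫ s in c..d, (F t s - F t y₀ - F x₀ s + F x₀ y₀)) = _
    rw [intervalIntegral.integral_add (((iF t).sub intervalIntegrable_const).sub (iF x₀))
        intervalIntegrable_const,
      intervalIntegral.integral_sub ((iF t).sub intervalIntegrable_const) (iF x₀),
      intervalIntegral.integral_sub (iF t) intervalIntegrable_const,
      intervalIntegral.integral_const, intervalIntegral.integral_const,
      smul_eq_mul, smul_eq_mul]
  have iGb : IntervalIntegrable (fun t => (d - c) * F t y₀) volume a b := iFy.const_mul _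
  have hGeq : (∫ t in a..b, G t)
      = (∫ t in a..b, ∫ s in c..d, F t s) - (d - c) * (∫ t in a..b, F t y₀)
        - (b - a) * (∫ s in c..d, F x₀ s) + (b - a) * ((d - c) * F x₀ y₀) := by
    have step1 : (∫ t in a..b, G t) = ∫ t in a..b,
        ((∫ s in c..d, F t s) - (d - c) * F t y₀ - (∫ s in c..d, F x₀ s)
          + (d - c) * F x₀ y₀) :=
      intervalIntegral.integral_congr fun t _ => hGint t
    rw [step1,
      intervalIntegral.integral_add
        (((iI.intervalIntegrable a b).sub iGb).sub intervalIntegrable_const)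
        intervalIntegrable_const,
      intervalIntegral.integral_sub ((iI.intervalIntegrable a b).sub iGb)
        intervalIntegrable_const,
      intervalIntegral.integral_sub (iI.intervalIntegrable a b) iGb,
      intervalIntegral.integral_const_mul, intervalIntegral.integral_const,
      intervalIntegral.integral_const, smul_eq_mul, smul_eq_mul]
  have goal_eq : (b - a) * (d - c) * F x₀ y₀ - (d - c) * (∫ t in a..b, F t y₀)
      - (b - a) * (∫ s in c..d, F x₀ s) + (∫ t in a..b, ∫ s in c..d, F t s)
      = ∫ t in a..b, G t := by rw [hGeq]; ring
  rw [goal_eq]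
  -- bound on G
  have hbound1 : ∀ t ∈ Set.Ioo a b, |G t| ≤ M * ((d - c) ^ 2 / 4) * |t - x₀| := by
    intro t ht
    have ae : ∀ᵐ s ∂(volume.restrict (Set.uIoc c d)),
        ‖F t s - F t y₀ - F x₀ s + F x₀ y₀‖ ≤ M * |s - y₀| * |t - x₀| := by
      rw [Set.uIoc_of_le hcd.le,
        ← MeasureTheory.Measure.restrict_congr_set MeasureTheory.Ioo_ae_eq_Ioc]
      filter_upwards [MeasureTheory.ae_restrict_mem measurableSet_Ioo] with s hs
      rw [Real.norm_eq_abs]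
      exact key t ht s hs
    have ib : IntervalIntegrable (fun s => M * |s - y₀| * |t - x₀|) volume c d := by
      apply Continuous.intervalIntegrable
      exact (continuous_const.mul
        (continuous_abs.comp (continuous_id.sub continuous_const))).mul continuous_const
    have step := intervalIntegral.norm_integral_le_abs_of_norm_le ae ib
    have comp : (∫ s in c..d, M * |s - y₀| * |t - x₀|)
        = M * |t - x₀| * ((d - c) ^ 2 / 4) := by
      have hre : (fun s => M * |s - y₀| * |t - x₀|)
          = fun s => (M * |t - x₀|) * |s - y₀| := by funext s; ring
      rw [hre, intervalIntegral.integral_const_mul, hy₀def, integral_abs_mid c d hcd.le]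
    rw [Real.norm_eq_abs, comp, abs_of_nonneg
      (mul_nonneg (mul_nonneg hM0 (abs_nonneg _)) (by positivity))] at step
    calc |G t| = |∫ s in c..d, (F t s - F t y₀ - F x₀ s + F x₀ y₀)| := by rw [hGdef]
      _ ≤ M * |t - x₀| * ((d - c) ^ 2 / 4) := step
      _ = M * ((d - c) ^ 2 / 4) * |t - x₀| := by ring
  have ae2 : ∀ᵐ t ∂(volume.restrict (Set.uIoc a b)),
      ‖G t‖ ≤ M * ((d - c) ^ 2 / 4) * |t - x₀| := by
    rw [Set.uIoc_of_le hab.le,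
      ← MeasureTheory.Measure.restrict_congr_set MeasureTheory.Ioo_ae_eq_Ioc]
    filter_upwards [MeasureTheory.ae_restrict_mem measurableSet_Ioo] with t ht
    rw [Real.norm_eq_abs]
    exact hbound1 t ht
  have ib2 : IntervalIntegrable (fun t => M * ((d - c) ^ 2 / 4) * |t - x₀|) volume a b := by
    apply Continuous.intervalIntegrable
    exact continuous_const.mul (continuous_abs.comp (continuous_id.sub continuous_const))
  have final := intervalIntegral.norm_integral_le_abs_of_norm_le ae2 ib2
  have comp2 : (∫ t in a..b, M * ((d - c) ^ 2 / 4) * |t - x₀|)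
      = M * ((d - c) ^ 2 / 4) * ((b - a) ^ 2 / 4) := by
    rw [intervalIntegral.integral_const_mul, hx₀def, integral_abs_mid a b hab.le]
  rw [Real.norm_eq_abs, comp2, abs_of_nonneg
    (mul_nonneg (mul_nonneg hM0 (by positivity)) (by positivity))] at final
  calc |∫ t in a..b, G t| ≤ M * ((d - c) ^ 2 / 4) * ((b - a) ^ 2 / 4) := final
    _ = 1 / 16 * M * (b - a) ^ 2 * (d - c) ^ 2 := by ring
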